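/- For the Walsh-Paley system, ‖D_{2^{2n+1}} − D_{2^{2n}}‖_{H_p} ≤ c_p · 2^{2n(1−1/p)} for 0 < p ≤ 1, where the H_p quasi-norm is taken with respect to the dyadic martingale filtration on G. -/

import Mathlib

open MeasureTheory ENNReal Filter
open scoped Classical

noncomputable section

instance : TopologicalSpace (ZMod 2) := ⊥
instance : DiscreteTopology (ZMod 2) := ⟨rfl⟩
instance : MeasurableSpace (ZMod 2) := ⊤
instance : BorelSpace (ZMod 2) := ⟨borel_eq_top_of_discrete.symm⟩
instance : IsTopologicalAddGroup (ZMod 2) where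
  continuous_add := continuous_of_discreteTopology
  continuous_neg := continuous_of_discreteTopology

/-- The dyadic group `G = (ℤ/2)^ℕ`. -/
abbrev G2 : Type := ℕ → ZMod 2

/-- Normalized Haar (probability) measure on `G2`. -/
def muG : Measure G2 :=
  Measure.addHaarMeasure ⟨⟨Set.univ, isCompact_univ⟩, by
    rw [interior_univ]; exact Set.univ_nonempty⟩

/-- Rademacher functions. -/
def rad (k : ℕ) (x : G2) : ℝ := (-1 : ℝ) ^ ((x k).val)

/-- Walsh–Paley functions. -/
def walsh (n : ℕ) (x : G2) : ℝ :=
  ∏ k ∈ Finset.range n, if n.testBit k then rad k x else 1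

/-- Walsh–Dirichlet kernels. -/
def dirichlet (n : ℕ) (x : G2) : ℝ := ∑ k ∈ Finset.range n, walsh k x

/-- The cylinder sets `I_n`. -/
def cyl (n : ℕ) : Set G2 := {x | ∀ i < n, x i = 0}

/-- Walsh–Fourier coefficients. -/
def fhat (f : G2 → ℝ) (k : ℕ) : ℝ := ∫ x, f x * walsh k x ∂muG

/-- Walsh–Fourier partial sums of a function. -/
def funS (f : G2 → ℝ) (n : ℕ) (x : G2) : ℝ :=
  ∑ k ∈ Finset.range n, fhat f k * walsh k x

/-- Partial sums of the Walsh series of a dyadic martingale given by coefficients `c`. -/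
def mS (c : ℕ → ℝ) (n : ℕ) (x : G2) : ℝ := ∑ k ∈ Finset.range n, c k * walsh k x

/-- The martingale maximal function. -/
def mMax (c : ℕ → ℝ) (x : G2) : ℝ≥0∞ := ⨆ n : ℕ, (‖mS c (2 ^ n) x‖₊ : ℝ≥0∞)

/-- The martingale Hardy space quasi-norm `H_p`. -/
def mHp (p : ℝ) (c : ℕ → ℝ) : ℝ≥0∞ := (∫⁻ x, (mMax c x) ^ p ∂muG) ^ (1 / p)

/-- The maximal function of an integrable function. -/
def funMax (f : G2 → ℝ) (x : G2) : ℝ≥0∞ := ⨆ n : ℕ, (‖funS f (2 ^ n) x‖₊ : ℝ≥0∞)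

/-- The Hardy space quasi-norm of an integrable function. -/
def funHp (p : ℝ) (f : G2 → ℝ) : ℝ≥0∞ := (∫⁻ x, (funMax f x) ^ p ∂muG) ^ (1 / p)

/-- Weak `L^p` quasi-norm. -/
def weakLp (p : ℝ) (f : G2 → ℝ) : ℝ≥0∞ :=
  ⨆ t : NNReal, (t : ℝ≥0∞) * (muG {x | (t : ℝ) < |f x|}) ^ (1 / p)


/-- `f_n = D_{2^{2n+1}} - D_{2^{2n}}`. -/
def fwn (n : ℕ) (x : G2) : ℝ := dirichlet (2 ^ (2 * n + 1)) x - dirichlet (2 ^ (2 * n)) x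

/-! ### Auxiliary lemmas -/

lemma zmod2_cases (a : ZMod 2) : a = 0 ∨ a = 1 := by revert a; decide

lemma rad_of_zero {j : ℕ} {x : G2} (h : x j = 0) : rad j x = 1 := by
  simp [rad, h]

lemma zmod2_val_one : (1 : ZMod 2).val = 1 := rfl

lemma rad_of_one {j : ℕ} {x : G2} (h : x j = 1) : rad j x = -1 := by
  simp [rad, h, zmod2_val_one]

lemma rad_sq (j : ℕ) (x : G2) : rad j x = 1 ∨ rad j x = -1 := by
  rcases zmod2_cases (x j) with h | h
  · exact Or.inl (rad_of_zero h)
  · exact Or.inr (rad_of_one h)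

lemma abs_rad (j : ℕ) (x : G2) : |rad j x| = 1 := by
  rcases rad_sq j x with h | h <;> simp [h]

lemma rad_add (j : ℕ) (x y : G2) : rad j (x + y) = rad j x * rad j y := by
  have hx : (x + y) j = x j + y j := rfl
  rcases zmod2_cases (x j) with h1 | h1 <;> rcases zmod2_cases (y j) with h2 | h2 <;>
    simp [rad_of_zero, rad_of_one, hx, h1, h2, rad, zmod2_val_one,
      show (1 : ZMod 2) + 1 = 0 by decide]

lemma measurable_rad (j : ℕ) : Measurable (rad j) := by
  have : Measurable fun x : G2 => x j := measurable_pi_apply j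
  exact (measurable_from_top (f := fun a : ZMod 2 => ((-1 : ℝ) ^ a.val))).comp this

lemma measurable_walsh (k : ℕ) : Measurable (walsh k) := by
  apply Finset.measurable_prod
  intro j _
  by_cases h : k.testBit j <;> simp [h, measurable_rad]

lemma abs_walsh (k : ℕ) (x : G2) : |walsh k x| = 1 := by
  rw [walsh, Finset.abs_prod]
  apply Finset.prod_eq_one
  intro j _
  by_cases h : k.testBit j <;> simp [h, abs_rad]

lemma walsh_add (k : ℕ) (x y : G2) : walsh k (x + y) = walsh k x * walsh k y := by
  rw [walsh, walsh, walsh, ← Finset.prod_mul_distrib]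
  apply Finset.prod_congr rfl
  intro j _
  by_cases h : k.testBit j <;> simp [h, rad_add]

lemma walsh_eq_prod (n m : ℕ) (h : n < 2 ^ m) (x : G2) :
    walsh n x = ∏ j ∈ Finset.range m, if n.testBit j then rad j x else 1 := by
  rw [walsh]
  rcases le_total n m with h1 | h1
  · apply Finset.prod_subset (Finset.range_subset_range.2 h1)
    intro j hj hj'
    have hjn : n ≤ j := by simpa using hj'
    have : n.testBit j = false := Nat.testBit_lt_two_pow (lt_of_lt_of_le (Nat.lt_two_pow_self) (Nat.pow_le_pow_right (by norm_num) hjn))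
    simp [this]
  · refine (Finset.prod_subset (Finset.range_subset_range.2 h1) ?_).symm
    intro j hj hj'
    have hjm : m ≤ j := by simpa using hj'
    have : n.testBit j = false := Nat.testBit_lt_two_pow (lt_of_lt_of_le h (Nat.pow_le_pow_right (by norm_num) hjm))
    simp [this]

lemma dirichlet_two_pow (m : ℕ) (x : G2) :
    dirichlet (2 ^ m) x = ∏ j ∈ Finset.range m, (1 + rad j x) := by
  induction m with
  | zero => simp [dirichlet, walsh]
  | succ m ih =>
    rw [Finset.prod_range_succ, ← ih, dirichlet, dirichlet]
    have h2 : (2 : ℕ) ^ (m + 1) = 2 ^ m + 2 ^ m := by ring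
    rw [h2, Finset.sum_range_add]
    have key : ∀ k < 2 ^ m, walsh (2 ^ m + k) x = walsh k x * rad m x := by
      intro k hk
      have hlt : 2 ^ m + k < 2 ^ (m + 1) := by omega
      rw [walsh_eq_prod _ (m + 1) hlt, Finset.prod_range_succ,
        walsh_eq_prod k m hk]
      congr 1
      · apply Finset.prod_congr rfl
        intro j hj
        rw [Nat.testBit_two_pow_add_gt (Finset.mem_range.1 hj)]
      · have : (2 ^ m + k).testBit m = true := by
          rw [Nat.testBit_two_pow_add_eq, Nat.testBit_lt_two_pow hk]
          rfl
        simp [this]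
    rw [Finset.sum_congr rfl (fun k hk => key k (Finset.mem_range.1 hk))]
    rw [← Finset.sum_mul]
    ring

lemma dirichlet_eq_indicator (m : ℕ) :
    dirichlet (2 ^ m) = (cyl m).indicator (fun _ => (2 : ℝ) ^ m) := by
  funext x
  rw [dirichlet_two_pow]
  by_cases hx : x ∈ cyl m
  · rw [Set.indicator_of_mem hx]
    rw [Finset.prod_congr rfl (fun j hj => by
      rw [rad_of_zero (hx j (Finset.mem_range.1 hj))])]
    norm_num
  · rw [Set.indicator_of_notMem hx]
    obtain ⟨i, hi, hxi⟩ : ∃ i, i < m ∧ x i ≠ 0 := by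
      by_contra h
      push_neg at h
      exact hx fun i hi => h i hi
    apply Finset.prod_eq_zero (Finset.mem_range.2 hi)
    have : x i = 1 := (zmod2_cases (x i)).resolve_left hxi
    rw [rad_of_one this]
    ring

lemma measurableSet_cyl (m : ℕ) : MeasurableSet (cyl m) := by
  have : cyl m = ⋂ (i : ℕ) (_ : i < m), (fun x : G2 => x i) ⁻¹' {0} := by
    ext x; simp [cyl]
  rw [this]
  exact MeasurableSet.iInter fun i => MeasurableSet.iInter fun _ =>
    (measurable_pi_apply i) trivial

instance : IsProbabilityMeasure muG := by
  constructor
  show muG (Set.univ : Set G2) = 1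
  exact Measure.addHaarMeasure_self

instance : muG.IsAddLeftInvariant := by
  unfold muG; infer_instance

/-- The delta function at position `t`. -/
def deltaG (t : ℕ) : G2 := fun i => if i = t then 1 else 0

lemma deltaG_apply_ne {t i : ℕ} (h : i ≠ t) : deltaG t i = 0 := if_neg h

lemma deltaG_apply_self (t : ℕ) : deltaG t t = 1 := if_pos rfl

lemma deltaG_add_apply (t i : ℕ) (x : G2) : (deltaG t + x) i = deltaG t i + x i := rfl

lemma cyl_succ_subset (m : ℕ) : cyl (m + 1) ⊆ cyl m :=
  fun x hx i hi => hx i (by omega)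

lemma muG_cyl (m : ℕ) : muG (cyl m) = 2⁻¹ ^ m := by
  induction m with
  | zero =>
    have : cyl 0 = Set.univ := by ext x; simp [cyl]
    simp [this]
  | succ m ih =>
    have hpre : (fun x => deltaG m + x) ⁻¹' (cyl (m + 1)) = cyl m \ cyl (m + 1) := by
      ext x
      simp only [Set.mem_preimage, Set.mem_diff, cyl, Set.mem_setOf_eq]
      constructor
      · intro h
        refine ⟨fun i hi => ?_, ?_⟩
        · have h0 := h i (by omega)
          rw [deltaG_add_apply, deltaG_apply_ne (by omega), zero_add] at h0
          exact h0
        · intro hall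
          have h0 := h m (by omega)
          have hxm := hall m (by omega)
          rw [deltaG_add_apply, deltaG_apply_self, hxm, add_zero] at h0
          exact one_ne_zero h0
      · rintro ⟨h1, h2⟩
        intro i hi
        rcases lt_or_eq_of_le (Nat.le_of_lt_succ hi) with hi' | hi'
        · rw [deltaG_add_apply, deltaG_apply_ne (by omega), zero_add]
          exact h1 i hi'
        · subst hi'
          have hxm : x i = 1 := by
            rcases zmod2_cases (x i) with h | h
            · exfalso; apply h2; intro j hj
              rcases lt_or_eq_of_le (Nat.le_of_lt_succ hj) with hj' | hj'
              · exact h1 j hj'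
              · subst hj'; exact h
            · exact h
          rw [deltaG_add_apply, deltaG_apply_self, hxm]
          decide
    have hinv : muG ((fun x => deltaG m + x) ⁻¹' (cyl (m + 1))) = muG (cyl (m + 1)) :=
      measure_preimage_add muG _ _
    have hsplit : muG (cyl m) = muG (cyl (m + 1)) + muG (cyl m \ cyl (m + 1)) := by
      rw [← measure_union (Disjoint.symm Set.disjoint_sdiff_left)
        ((measurableSet_cyl m).diff (measurableSet_cyl (m + 1)))]
      congr 1
      rw [Set.union_diff_cancel (cyl_succ_subset m)]
    rw [hpre] at hinv
    rw [hinv] at hsplit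
    rw [ih] at hsplit
    have h2 : (2 : ℝ≥0∞) * muG (cyl (m + 1)) = 2⁻¹ ^ m := by
      rw [two_mul]; exact hsplit.symm
    have : muG (cyl (m + 1)) = 2⁻¹ * (2 : ℝ≥0∞)⁻¹ ^ m := by
      have h22 : (2 : ℝ≥0∞) ≠ 0 := by norm_num
      have h2t : (2 : ℝ≥0∞) ≠ ⊤ := by norm_num
      calc muG (cyl (m + 1)) = 2⁻¹ * (2 * muG (cyl (m + 1))) := by
            rw [← mul_assoc, ENNReal.inv_mul_cancel h22 h2t, one_mul]
        _ = 2⁻¹ * 2⁻¹ ^ m := by rw [h2]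
    rw [this, pow_succ]
    ring

lemma walsh_one_on_cyl {k m : ℕ} (hk : k < 2 ^ m) {x : G2} (hx : x ∈ cyl m) :
    walsh k x = 1 := by
  rw [walsh_eq_prod k m hk]
  apply Finset.prod_eq_one
  intro j hj
  have : rad j x = 1 := rad_of_zero (hx j (Finset.mem_range.1 hj))
  simp [this]

lemma integrable_ind (m k : ℕ) (c : ℝ) :
    Integrable ((cyl m).indicator (fun y => c * walsh k y)) muG := by
  have hm : Measurable ((cyl m).indicator (fun y => c * walsh k y)) :=
    ((measurable_walsh k).const_mul c).indicator (measurableSet_cyl m)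
  refine Integrable.mono' (integrable_const |c|) hm.aestronglyMeasurable ?_
  filter_upwards with x
  by_cases hx : x ∈ cyl m
  · rw [Set.indicator_of_mem hx]
    rw [Real.norm_eq_abs, abs_mul, abs_walsh, mul_one]
  · rw [Set.indicator_of_notMem hx]
    simp

lemma walsh_deltaG {k t : ℕ} (ht : k.testBit t = true) :
    walsh k (deltaG t) = -1 := by
  have htk : t < k := by
    have h1 : 2 ^ t ≤ k := Nat.ge_two_pow_of_testBit ht
    have h2 : t < 2 ^ t := Nat.lt_two_pow_self
    omega
  rw [walsh]
  rw [Finset.prod_eq_single_of_mem t (Finset.mem_range.2 htk)]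
  · rw [if_pos ht, rad_of_one (by simp [deltaG])]
  · intro j _ hj
    have : deltaG t j = 0 := by simp [deltaG, hj]
    by_cases hb : k.testBit j <;> simp [hb, rad_of_zero this]

lemma integral_ind_vanish {m k t : ℕ} (hmt : m ≤ t) (ht : k.testBit t = true) (c : ℝ) :
    ∫ x, (cyl m).indicator (fun y => c * walsh k y) x ∂muG = 0 := by
  set g := (cyl m).indicator (fun y => c * walsh k y) with hg
  have key : ∀ x, g (deltaG t + x) = - g x := by
    intro x
    have hmem : (deltaG t + x ∈ cyl m) ↔ (x ∈ cyl m) := by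
      constructor
      · intro h i hi
        have h0 := h i hi
        rw [deltaG_add_apply, deltaG_apply_ne (by omega), zero_add] at h0
        exact h0
      · intro h i hi
        rw [deltaG_add_apply, deltaG_apply_ne (by omega), zero_add]
        exact h i hi
    by_cases hx : x ∈ cyl m
    · rw [hg, Set.indicator_of_mem (hmem.2 hx), Set.indicator_of_mem hx]
      rw [walsh_add, walsh_deltaG ht]
      ring
    · rw [hg, Set.indicator_of_notMem (fun h => hx (hmem.1 h)),
        Set.indicator_of_notMem hx]
      ring
  have hinv : ∫ x, g (deltaG t + x) ∂muG = ∫ x, g x ∂muG :=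
    integral_add_left_eq_self g (deltaG t)
  rw [funext key] at hinv
  rw [integral_neg] at hinv
  linarith

lemma integral_ind_const {m k : ℕ} (hk : k < 2 ^ m) (c : ℝ) :
    ∫ x, (cyl m).indicator (fun y => c * walsh k y) x ∂muG = c * ((2 : ℝ) ^ m)⁻¹ := by
  have : (cyl m).indicator (fun y => c * walsh k y) = (cyl m).indicator (fun _ => c) := by
    apply Set.indicator_congr
    intro x hx
    show c * walsh k x = c
    rw [walsh_one_on_cyl hk hx, mul_one]
  rw [this, integral_indicator_const _ (measurableSet_cyl m), measureReal_def, muG_cyl]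
  rw [smul_eq_mul, mul_comm]
  congr 1
  simp [ENNReal.toReal_pow, ENNReal.toReal_inv, inv_pow]

lemma fwn_eq (n : ℕ) (x : G2) :
    fwn n x = (cyl (2 * n + 1)).indicator (fun _ => (2 : ℝ) ^ (2 * n + 1)) x
      - (cyl (2 * n)).indicator (fun _ => (2 : ℝ) ^ (2 * n)) x := by
  rw [fwn, dirichlet_eq_indicator, dirichlet_eq_indicator]

lemma ind_mul (s : Set G2) (c : ℝ) (w : G2 → ℝ) (x : G2) :
    (s.indicator (fun _ => c) x) * w x = s.indicator (fun y => c * w y) x := by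
  by_cases hx : x ∈ s <;> simp [hx]

lemma fhat_fwn (n k : ℕ) :
    fhat (fwn n) k = if 2 ^ (2 * n) ≤ k ∧ k < 2 ^ (2 * n + 1) then 1 else 0 := by
  have hrw : ∀ x, fwn n x * walsh k x =
      (cyl (2 * n + 1)).indicator (fun y => (2 : ℝ) ^ (2 * n + 1) * walsh k y) x
      - (cyl (2 * n)).indicator (fun y => (2 : ℝ) ^ (2 * n) * walsh k y) x := by
    intro x
    rw [fwn_eq, sub_mul, ind_mul, ind_mul]
  rw [fhat]
  rw [integral_congr_ae (Filter.Eventually.of_forall hrw)]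
  rw [integral_sub (integrable_ind _ _ _) (integrable_ind _ _ _)]
  rcases lt_or_ge k (2 ^ (2 * n)) with h1 | h1
  · have h2 : k < 2 ^ (2 * n + 1) := lt_of_lt_of_le h1 (Nat.pow_le_pow_right (by norm_num) (by omega))
    rw [integral_ind_const h2, integral_ind_const h1]
    rw [if_neg (by omega)]
    field_simp
    ring
  rcases lt_or_ge k (2 ^ (2 * n + 1)) with h2 | h2
  · obtain ⟨t, ht1, ht2⟩ := Nat.exists_ge_and_testBit_of_ge_two_pow h1
    rw [integral_ind_const h2, integral_ind_vanish ht1 ht2]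
    rw [if_pos ⟨h1, h2⟩]
    field_simp
    ring
  · obtain ⟨t, ht1, ht2⟩ := Nat.exists_ge_and_testBit_of_ge_two_pow h2
    rw [integral_ind_vanish (by omega : 2 * n + 1 ≤ t) ht2,
      integral_ind_vanish (by omega : 2 * n ≤ t) ht2]
    rw [if_neg (by omega)]
    ring

lemma funS_fwn_small {n m : ℕ} (h : m ≤ 2 * n) (x : G2) :
    funS (fwn n) (2 ^ m) x = 0 := by
  rw [funS]
  apply Finset.sum_eq_zero
  intro k hk
  have hk' : k < 2 ^ (2 * n) :=
    lt_of_lt_of_le (Finset.mem_range.1 hk) (Nat.pow_le_pow_right (by norm_num) h)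
  rw [fhat_fwn, if_neg (by omega), zero_mul]

lemma funS_fwn_big {n m : ℕ} (h : 2 * n + 1 ≤ m) (x : G2) :
    funS (fwn n) (2 ^ m) x = fwn n x := by
  rw [funS]
  have hsub : 2 ^ (2 * n + 1) ≤ 2 ^ m := Nat.pow_le_pow_right (by norm_num) h
  have step : ∀ k ∈ Finset.range (2 ^ m),
      fhat (fwn n) k * walsh k x =
      if k ∈ Finset.Ico (2 ^ (2 * n)) (2 ^ (2 * n + 1)) then walsh k x else 0 := by
    intro k _
    rw [fhat_fwn]
    by_cases hk : 2 ^ (2 * n) ≤ k ∧ k < 2 ^ (2 * n + 1)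
    · rw [if_pos hk, if_pos (Finset.mem_Ico.2 hk), one_mul]
    · rw [if_neg hk, if_neg (fun h => hk (Finset.mem_Ico.1 h)), zero_mul]
  rw [Finset.sum_congr rfl step, Finset.sum_ite_mem]
  have hint : Finset.range (2 ^ m) ∩ Finset.Ico (2 ^ (2 * n)) (2 ^ (2 * n + 1))
      = Finset.Ico (2 ^ (2 * n)) (2 ^ (2 * n + 1)) := by
    apply Finset.inter_eq_right.2
    intro k hk
    exact Finset.mem_range.2 (lt_of_lt_of_le (Finset.mem_Ico.1 hk).2 hsub)
  rw [hint, Finset.sum_Ico_eq_sub _ (Nat.pow_le_pow_right (by norm_num) (by omega)),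
    fwn, dirichlet, dirichlet]

lemma funMax_fwn (n : ℕ) (x : G2) : funMax (fwn n) x = (‖fwn n x‖₊ : ℝ≥0∞) := by
  apply le_antisymm
  · apply iSup_le
    intro m
    rcases le_or_gt m (2 * n) with h | h
    · rw [funS_fwn_small h]
      simp
    · rw [funS_fwn_big (by omega)]
  · have := le_iSup (fun m => (‖funS (fwn n) (2 ^ m) x‖₊ : ℝ≥0∞)) (2 * n + 1)
    rwa [funS_fwn_big (le_refl _)] at this

theorem stmt7 (p : ℝ) (hp : 0 < p) (hp1 : p ≤ 1) :
    ∃ c : ℝ, 0 < c ∧ ∀ n : ℕ,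
      funHp p (fwn n) ≤ ENNReal.ofReal (c * (2 : ℝ) ^ ((2 * n : ℝ) * (1 - 1 / p))) := by
  refine ⟨3, by norm_num, fun n => ?_⟩
  set A : ℝ := 3 * 2 ^ (2 * n) with hA
  have hA0 : (0 : ℝ) < A := by positivity
  -- pointwise bound on the maximal function
  have hbound : ∀ x, funMax (fwn n) x ^ p ≤
      (cyl (2 * n)).indicator (fun _ => ENNReal.ofReal A ^ p) x := by
    intro x
    rw [funMax_fwn]
    by_cases hx : x ∈ cyl (2 * n)
    · rw [Set.indicator_of_mem hx]
      apply ENNReal.rpow_le_rpow _ hp.le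
      rw [show (‖fwn n x‖₊ : ℝ≥0∞) = ENNReal.ofReal ‖fwn n x‖ from (ENNReal.ofReal_eq_coe_nnreal (norm_nonneg _)).symm]
      apply ENNReal.ofReal_le_ofReal
      rw [fwn_eq]
      have h1 : |(cyl (2 * n + 1)).indicator (fun _ => (2 : ℝ) ^ (2 * n + 1)) x| ≤ 2 ^ (2 * n + 1) := by
        by_cases h : x ∈ cyl (2 * n + 1) <;> simp [h] <;> positivity
      have h2 : |(cyl (2 * n)).indicator (fun _ => (2 : ℝ) ^ (2 * n)) x| ≤ 2 ^ (2 * n) := by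
        by_cases h : x ∈ cyl (2 * n) <;> simp [h] <;> positivity
      rw [Real.norm_eq_abs]
      calc |_ - _| ≤ _ + _ := abs_sub _ _
        _ ≤ 2 ^ (2 * n + 1) + 2 ^ (2 * n) := add_le_add h1 h2
        _ ≤ A := by rw [hA]; ring_nf; nlinarith [pow_pos (by norm_num : (0:ℝ) < 2) (2 * n)]
    · rw [Set.indicator_of_notMem hx]
      have hz : fwn n x = 0 := by
        rw [fwn_eq, Set.indicator_of_notMem hx,
          Set.indicator_of_notMem (fun h => hx (cyl_succ_subset _ h)), sub_zero]
      rw [hz]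
      simp [ENNReal.zero_rpow_of_pos hp]
  -- integrate
  have hint : ∫⁻ x, funMax (fwn n) x ^ p ∂muG ≤ ENNReal.ofReal A ^ p * 2⁻¹ ^ (2 * n) := by
    calc ∫⁻ x, funMax (fwn n) x ^ p ∂muG
        ≤ ∫⁻ x, (cyl (2 * n)).indicator (fun _ => ENNReal.ofReal A ^ p) x ∂muG :=
          lintegral_mono hbound
      _ = ENNReal.ofReal A ^ p * muG (cyl (2 * n)) := by
          rw [lintegral_indicator (measurableSet_cyl _), setLIntegral_const]
      _ = ENNReal.ofReal A ^ p * 2⁻¹ ^ (2 * n) := by rw [muG_cyl]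
  have h1p : (0 : ℝ) ≤ 1 / p := by positivity
  have key : funHp p (fwn n) ≤
      ENNReal.ofReal A * (2⁻¹ ^ (2 * n) : ℝ≥0∞) ^ (1 / p) := by
    rw [funHp]
    calc (∫⁻ x, funMax (fwn n) x ^ p ∂muG) ^ (1 / p)
        ≤ (ENNReal.ofReal A ^ p * 2⁻¹ ^ (2 * n)) ^ (1 / p) :=
          ENNReal.rpow_le_rpow hint h1p
      _ = (ENNReal.ofReal A ^ p) ^ (1 / p) * (2⁻¹ ^ (2 * n) : ℝ≥0∞) ^ (1 / p) :=
          ENNReal.mul_rpow_of_nonneg _ _ h1p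
      _ = ENNReal.ofReal A * (2⁻¹ ^ (2 * n) : ℝ≥0∞) ^ (1 / p) := by
          rw [← ENNReal.rpow_mul, mul_one_div_cancel hp.ne', ENNReal.rpow_one]
  refine key.trans_eq ?_
  -- identify the right-hand side
  have h1 : ((2 : ℝ≥0∞)⁻¹ ^ (2 * n)) = (2 : ℝ≥0∞) ^ (-((2 * n : ℕ) : ℝ)) := by
    rw [← ENNReal.rpow_natCast ((2 : ℝ≥0∞)⁻¹) (2 * n), ENNReal.inv_rpow, ← ENNReal.rpow_neg]
  rw [h1, ← ENNReal.rpow_mul]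
  set r : ℝ := -((2 * n : ℕ) : ℝ) * (1 / p) with hr
  have h2 : (2 : ℝ≥0∞) ^ r = ENNReal.ofReal ((2 : ℝ) ^ r) := by
    rw [← ENNReal.ofReal_rpow_of_pos (by norm_num : (0:ℝ) < 2)]
    norm_num
  rw [h2, ← ENNReal.ofReal_mul hA0.le]
  congr 1
  rw [hA, mul_assoc, ← Real.rpow_natCast (2 : ℝ) (2 * n),
    ← Real.rpow_add (by norm_num : (0:ℝ) < 2)]
  congr 1
  rw [hr]
  push_cast
  ring

end
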